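/- Let H be an infinite-dimensional complex separable Hilbert space with a fixed orthonormal basis {e_n}_{n∈ℕ}, associated canonical conjugation J, and canonical shift S_H (S_H e_n = e_{n+1}). Let C be a conjugation on H, let {f_n}_{n∈ℕ} be an orthonormal basis of H, let S be the unilateral shift corresponding to {f_n} (S f_n = f_{n+1}), and let U be the unitary operator determined by U e_n = f_n for all n. Then C ∘ S_H = S ∘ C if and only if there exists λ ∈ ℂ with |λ| = 1 such that C = λ · (U ∘ J), i.e., C x = λ · U(J x) for all x ∈ H. -/

import Mathlib

noncomputable section
open scoped ComplexConjugate
open ContinuousLinearMap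

/-- A conjugation on a complex Hilbert space: an antilinear, involutive, isometric map. -/
def IsConjugation {E : Type*} [NormedAddCommGroup E] [InnerProductSpace ℂ E] (C : E → E) : Prop :=
  (∀ (a : ℂ) (f g : E), C (a • f + g) = conj a • C f + C g) ∧
  (∀ f, C (C f) = f) ∧
  (∀ f, ‖C f‖ = ‖f‖)

section Aux

variable {H : Type*} [NormedAddCommGroup H] [InnerProductSpace ℂ H]

lemma IsConjugation.zero {C : H → H} (hC : IsConjugation C) : C 0 = 0 := by
  have h := hC.1 1 0 0
  simp only [one_smul, add_zero, map_one] at h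
  exact right_eq_add.mp h

lemma IsConjugation.add {C : H → H} (hC : IsConjugation C) (x y : H) :
    C (x + y) = C x + C y := by
  simpa using hC.1 1 x y

lemma IsConjugation.smulC {C : H → H} (hC : IsConjugation C) (a : ℂ) (x : H) :
    C (a • x) = conj a • C x := by
  simpa [hC.zero] using hC.1 a x 0

lemma IsConjugation.sub {C : H → H} (hC : IsConjugation C) (x y : H) :
    C (x - y) = C x - C y := by
  have h := hC.1 (-1) y x
  rw [neg_one_smul, neg_add_eq_sub] at h
  rw [h]
  simp [sub_eq_neg_add]

lemma IsConjugation.isometry {C : H → H} (hC : IsConjugation C) : Isometry C := by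
  refine Isometry.of_dist_eq fun x y => ?_
  rw [dist_eq_norm, dist_eq_norm, ← hC.sub x y, hC.2.2]

lemma IsConjugation.continuous {C : H → H} (hC : IsConjugation C) : Continuous C :=
  hC.isometry.continuous

/-- Two continuous antilinear maps agreeing on a Hilbert basis are equal. -/
lemma antilinear_ext [CompleteSpace H] {F : Type*} [NormedAddCommGroup F] [NormedSpace ℂ F]
    (e : HilbertBasis ℕ ℂ H) {T₁ T₂ : H → F}
    (hc₁ : Continuous T₁) (hc₂ : Continuous T₂)
    (h₁ : ∀ (a : ℂ) (x y : H), T₁ (a • x + y) = conj a • T₁ x + T₁ y)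
    (h₂ : ∀ (a : ℂ) (x y : H), T₂ (a • x + y) = conj a • T₂ x + T₂ y)
    (hbase : ∀ n, T₁ (e n) = T₂ (e n)) : ∀ x, T₁ x = T₂ x := by
  have hzero : ∀ (T : H → F),
      (∀ (a : ℂ) (x y : H), T (a • x + y) = conj a • T x + T y) → T 0 = 0 := by
    intro T hT
    have h := hT 1 0 0
    simp only [one_smul, add_zero, map_one] at h
    exact right_eq_add.mp h
  have hd : Dense ((Submodule.span ℂ (Set.range e) : Submodule ℂ H) : Set H) :=
    Submodule.dense_iff_topologicalClosure_eq_top.mpr e.dense_span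
  have heq : Set.EqOn T₁ T₂ ((Submodule.span ℂ (Set.range e) : Submodule ℂ H) : Set H) := by
    intro x hx
    rw [SetLike.mem_coe] at hx
    induction hx using Submodule.span_induction with
    | mem x hx => obtain ⟨n, rfl⟩ := hx; exact hbase n
    | zero => rw [hzero T₁ h₁, hzero T₂ h₂]
    | add x y _ _ ihx ihy =>
        have e1 : T₁ (x + y) = T₁ x + T₁ y := by simpa using h₁ 1 x y
        have e2 : T₂ (x + y) = T₂ x + T₂ y := by simpa using h₂ 1 x y
        rw [e1, e2, ihx, ihy]
    | smul a x _ ih =>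
        have e1 : T₁ (a • x) = conj a • T₁ x := by simpa [hzero T₁ h₁] using h₁ a x 0
        have e2 : T₂ (a • x) = conj a • T₂ x := by simpa [hzero T₂ h₂] using h₂ a x 0
        rw [e1, e2, ih]
  exact fun x => congrFun (Continuous.ext_on hd hc₁ hc₂ heq) x

/-- Two continuous linear maps agreeing on a Hilbert basis are equal. -/
lemma linear_ext [CompleteSpace H] {F : Type*} [NormedAddCommGroup F] [NormedSpace ℂ F]
    (e : HilbertBasis ℕ ℂ H) {T₁ T₂ : H → F}
    (hc₁ : Continuous T₁) (hc₂ : Continuous T₂)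
    (h₁ : ∀ (a : ℂ) (x y : H), T₁ (a • x + y) = a • T₁ x + T₁ y)
    (h₂ : ∀ (a : ℂ) (x y : H), T₂ (a • x + y) = a • T₂ x + T₂ y)
    (hbase : ∀ n, T₁ (e n) = T₂ (e n)) : ∀ x, T₁ x = T₂ x := by
  have hzero : ∀ (T : H → F),
      (∀ (a : ℂ) (x y : H), T (a • x + y) = a • T x + T y) → T 0 = 0 := by
    intro T hT
    have h := hT 1 0 0
    simp only [one_smul, add_zero] at h
    exact right_eq_add.mp h
  have hd : Dense ((Submodule.span ℂ (Set.range e) : Submodule ℂ H) : Set H) :=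
    Submodule.dense_iff_topologicalClosure_eq_top.mpr e.dense_span
  have heq : Set.EqOn T₁ T₂ ((Submodule.span ℂ (Set.range e) : Submodule ℂ H) : Set H) := by
    intro x hx
    rw [SetLike.mem_coe] at hx
    induction hx using Submodule.span_induction with
    | mem x hx => obtain ⟨n, rfl⟩ := hx; exact hbase n
    | zero => rw [hzero T₁ h₁, hzero T₂ h₂]
    | add x y _ _ ihx ihy =>
        have e1 : T₁ (x + y) = T₁ x + T₁ y := by simpa using h₁ 1 x y
        have e2 : T₂ (x + y) = T₂ x + T₂ y := by simpa using h₂ 1 x y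
        rw [e1, e2, ihx, ihy]
    | smul a x _ ih =>
        have e1 : T₁ (a • x) = a • T₁ x := by simpa [hzero T₁ h₁] using h₁ a x 0
        have e2 : T₂ (a • x) = a • T₂ x := by simpa [hzero T₂ h₂] using h₂ a x 0
        rw [e1, e2, ih]
  exact fun x => congrFun (Continuous.ext_on hd hc₁ hc₂ heq) x

end Aux

/-- Let `H` be an infinite-dimensional complex separable Hilbert space with
fixed orthonormal basis `{e_n}`, canonical conjugation `J`, and canonical shift `S_H`
(`S_H e_n = e_{n+1}`).  Let `C` be a conjugation, `{f_n}` an orthonormal basis, `S` the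
unilateral shift corresponding to `{f_n}` (`S f_n = f_{n+1}`), and `U` the unitary with
`U e_n = f_n`.  Then `C ∘ S_H = S ∘ C` if and only if `C = λ · (U ∘ J)` for some unimodular
constant `λ`. -/
theorem conjugation_intertwines_shifts_iff
    {H : Type*} [NormedAddCommGroup H] [InnerProductSpace ℂ H] [CompleteSpace H]
    [TopologicalSpace.SeparableSpace H]
    (e : HilbertBasis ℕ ℂ H) (J : H → H)
    (hJ : IsConjugation J) (hJe : ∀ n, J (e n) = e n)
    (SH : H →L[ℂ] H) (hSH : ∀ n, SH (e n) = e (n + 1))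
    (C : H → H) (hC : IsConjugation C)
    (f : HilbertBasis ℕ ℂ H)
    (S : H →L[ℂ] H) (hSf : ∀ n, S (f n) = f (n + 1))
    (U : H ≃ₗᵢ[ℂ] H) (hU : ∀ n, U (e n) = f n) :
    (∀ x, C (SH x) = S (C x)) ↔
      ∃ lam : ℂ, ‖lam‖ = 1 ∧ ∀ x, C x = lam • U (J x) := by
  -- J commutes with SH
  have hJSH : ∀ x, J (SH x) = SH (J x) := by
    refine antilinear_ext e (hJ.continuous.comp SH.continuous)
      (SH.continuous.comp hJ.continuous) ?_ ?_ ?_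
    · intro a x y
      rw [map_add, map_smul, hJ.1]
    · intro a x y
      rw [hJ.1, map_add, map_smul]
    · intro n
      rw [hSH, hJe, hJe, hSH]
  -- S ∘ U = U ∘ SH
  have hSU : ∀ y, S (U y) = U (SH y) := by
    refine linear_ext e (S.continuous.comp U.continuous)
      (U.continuous.comp SH.continuous) ?_ ?_ ?_
    · intro a x y; rw [map_add, map_smul, map_add, map_smul]
    · intro a x y; rw [map_add, map_smul, map_add, map_smul]
    · intro n
      rw [hU, hSf, hSH, hU]
  constructor
  · intro h
    set V : H → H := fun x => U.symm (C (J x)) with hVdef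
    have hVadd : ∀ x y, V (x + y) = V x + V y := by
      intro x y
      simp only [hVdef, hJ.add, hC.add, map_add]
    have hVsmul : ∀ (a : ℂ) (x : H), V (a • x) = a • V x := by
      intro a x
      simp only [hVdef, hJ.smulC, hC.smulC, Complex.conj_conj, map_smul]
    have hVnorm : ∀ x, ‖V x‖ = ‖x‖ := by
      intro x
      simp only [hVdef, LinearIsometryEquiv.norm_map, hC.2.2, hJ.2.2]
    have hVcont : Continuous V :=
      U.symm.continuous.comp (hC.continuous.comp hJ.continuous)
    -- package V as a linear isometry
    set Vli : H →ₗᵢ[ℂ] H :=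
      ⟨{ toFun := V, map_add' := hVadd, map_smul' := hVsmul }, hVnorm⟩ with hVli
    have hVliapp : ∀ x, Vli x = V x := fun x => rfl
    -- V commutes with SH
    have hVSH : ∀ x, V (SH x) = SH (V x) := by
      intro x
      have h1 : C (J (SH x)) = S (C (J x)) := by rw [hJSH, h]
      have h2 : U.symm (S (C (J x))) = SH (U.symm (C (J x))) := by
        have := hSU (U.symm (C (J x)))
        rw [U.apply_symm_apply] at this
        rw [this, U.symm_apply_apply]
      simp only [hVdef, h1, h2]
    -- inverse of V
    set W : H → H := fun x => J (C (U x)) with hWdef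
    have hVW : ∀ x, V (W x) = x := by
      intro x
      simp only [hVdef, hWdef, hJ.2.1, hC.2.1, U.symm_apply_apply]
    have hWV : ∀ x, W (V x) = x := by
      intro x
      simp only [hVdef, hWdef, U.apply_symm_apply, hC.2.1, hJ.2.1]
    have hWSH : ∀ x, W (SH x) = SH (W x) := by
      intro x
      conv_lhs => rw [← hVW x]
      rw [← hVSH, hWV]
    -- inner product of a shifted vector against e 0 vanishes
    have hz : ∀ v : H, (inner ℂ (SH v) (e 0) : ℂ) = 0 := by
      refine antilinear_ext e (SH.continuous.inner continuous_const) continuous_const ?_ ?_ ?_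
      · intro a x y
        rw [map_add, map_smul, inner_add_left, inner_smul_left]
        simp [smul_eq_mul]
      · intro a x y; simp
      · intro n
        rw [hSH]
        exact e.orthonormal.2 (Nat.succ_ne_zero n)
    -- V (e 0) is orthogonal to e (n+1)
    have hperp : ∀ n, (inner ℂ (e (n + 1)) (V (e 0)) : ℂ) = 0 := by
      intro n
      have h1 : e (n + 1) = Vli (W (SH (e n))) := by
        rw [hVliapp, hVW, hSH]
      rw [h1, show V (e 0) = Vli (e 0) from rfl, LinearIsometry.inner_map_map,
        hWSH, hz]
    set c : ℂ := inner ℂ (e 0) (V (e 0)) with hcdef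
    have hnorm_e0 : ‖e 0‖ = 1 := e.orthonormal.1 0
    -- V (e 0) = c • e 0
    have hze : V (e 0) = c • e 0 := by
      have key : ∀ v : H, (inner ℂ v (V (e 0)) : ℂ) = (inner ℂ v (c • e 0) : ℂ) := by
        refine antilinear_ext (T₁ := fun v : H => (inner ℂ v (V (e 0)) : ℂ))
          (T₂ := fun v : H => (inner ℂ v (c • e 0) : ℂ)) e
          (continuous_id.inner continuous_const)
          (continuous_id.inner continuous_const) ?_ ?_ ?_
        · intro a x y; simp [inner_add_left, inner_smul_left, smul_eq_mul]; ring
        · intro a x y; simp [inner_add_left, inner_smul_left, smul_eq_mul]; ring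
        · intro n
          cases n with
          | zero =>
              show (inner ℂ (e 0) (V (e 0)) : ℂ) = inner ℂ (e 0) (c • e 0)
              rw [inner_smul_right]
              have h1 : (inner ℂ (e 0) (e 0) : ℂ) = 1 := by
                rw [inner_self_eq_norm_sq_to_K, hnorm_e0]
                norm_num
              rw [h1, mul_one]
          | succ m =>
              show (inner ℂ (e (m + 1)) (V (e 0)) : ℂ) = inner ℂ (e (m + 1)) (c • e 0)
              rw [hperp, inner_smul_right]
              rw [e.orthonormal.2 (Nat.succ_ne_zero m)]
              ring
      exact ext_inner_left ℂ key
    have hc1 : ‖c‖ = 1 := by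
      have h1 : ‖V (e 0)‖ = 1 := by rw [hVnorm, hnorm_e0]
      rw [hze, norm_smul, hnorm_e0, mul_one] at h1
      exact h1
    -- V (e n) = c • e n for all n
    have hVe : ∀ n, V (e n) = c • e n := by
      intro n
      induction n with
      | zero => exact hze
      | succ m ih =>
          rw [← hSH, hVSH, ih, map_smul, hSH]
    -- V = c • id
    have hV : ∀ x, V x = c • x := by
      refine linear_ext e hVcont (continuous_id.const_smul c) ?_ ?_ hVe
      · intro a x y; rw [hVadd, hVsmul]
      · intro a x y
        rw [smul_add, smul_comm]
    refine ⟨c, hc1, fun x => ?_⟩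
    have h1 : C (J (J x)) = U (V (J x)) := by
      simp only [hVdef, U.apply_symm_apply]
    rw [hJ.2.1] at h1
    rw [h1, hV, map_smul]
  · rintro ⟨lam, _, hform⟩ x
    rw [hform (SH x), hform x, hJSH, ← hSU, map_smul]
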